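/- Let A(ρ) be smooth and positive on ρ > 0, Q(ρ) an antiderivative of ρA²(ρ), and R(ρ) an antiderivative of Q(ρ). Define the surface N ⊂ ℝ⁴(t,x,u,ρ) parametrized by (u,ρ) via t = λu²/2 + α₀u + α₂/ρ + λR(ρ)/ρ + t₀ and x = λu³/3 - λuQ(ρ) + α₀u²/2 + λuR(ρ)/ρ + α₂u/ρ - α₀Q(ρ) + x₀, where λ, α₀, α₂, t₀, x₀ are constants. Then N is a multivalued solution of the Euler system: both 2-forms ω₁ = ρ dt∧du + u dt∧dρ - dx∧dρ and ω₂ = u dt∧du + (p′(ρ)/ρ) dt∧dρ - dx∧du restrict to zero on N, where p′(ρ) = ρ²A²(ρ). -/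
import Mathlib


/- STATEMENT 11: The surface N ⊂ ℝ⁴(t,x,u,ρ) parametrized by (u,ρ) via
   t = λu²/2 + α₀u + α₂/ρ + λR(ρ)/ρ + t₀,
   x = λu³/3 - λuQ(ρ) + α₀u²/2 + λuR(ρ)/ρ + α₂u/ρ - α₀Q(ρ) + x₀
   (Q′ = ρA², R′ = Q) is a multivalued solution of the Euler system: the
   pullbacks of ω₁ = ρdt∧du + udt∧dρ - dx∧dρ and
   ω₂ = udt∧du + (p′(ρ)/ρ)dt∧dρ - dx∧du (p′(ρ) = ρ²A²(ρ)) vanish on N.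
   The pullback of ω₁ along (u,ρ) ↦ (t(u,ρ),x(u,ρ),u,ρ) is
   (u·t_u - ρ·t_ρ - x_u) du∧dρ, and that of ω₂ is
   (-u·t_ρ + ρA²·t_u + x_ρ) du∧dρ. -/

noncomputable def pd1 (f : ℝ → ℝ → ℝ) (a b : ℝ) : ℝ := deriv (fun x => f x b) a

noncomputable def pd2 (f : ℝ → ℝ → ℝ) (a b : ℝ) : ℝ := deriv (fun y => f a y) b

theorem multivalued_solution_general_state
    (A Q R : ℝ → ℝ) (hA : ∀ r, 0 < r → 0 < A r)
    (hQ : ∀ r : ℝ, 0 < r → HasDerivAt Q (r * (A r) ^ 2) r)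
    (hR : ∀ r : ℝ, 0 < r → HasDerivAt R (Q r) r)
    (lam a0 a2 t0 x0 : ℝ)
    (tf xf : ℝ → ℝ → ℝ)
    (htf : ∀ u r : ℝ, tf u r = lam * u ^ 2 / 2 + a0 * u + a2 / r + lam * R r / r + t0)
    (hxf : ∀ u r : ℝ, xf u r = lam * u ^ 3 / 3 - lam * u * Q r + a0 * u ^ 2 / 2
      + lam * u * R r / r + a2 * u / r - a0 * Q r + x0) :
    ∀ u r : ℝ, 0 < r →
      u * pd1 tf u r - r * pd2 tf u r - pd1 xf u r = 0 ∧
      -u * pd2 tf u r + r * (A r) ^ 2 * pd1 tf u r + pd2 xf u r = 0 := by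

  intro u r hr
  have hr0 : r ≠ 0 := ne_of_gt hr
  have hinv : HasDerivAt (fun y : ℝ => y⁻¹) (-(r ^ 2)⁻¹) r := hasDerivAt_inv hr0
  -- pd1 tf
  have ht1 : pd1 tf u r = lam * u + a0 := by
    have heq : (fun x => tf x r) =
        fun x : ℝ => lam * x ^ 2 / 2 + a0 * x + (a2 / r + lam * R r / r + t0) := by
      funext x; rw [htf]; ring
    have h : HasDerivAt
        (fun x : ℝ => lam * x ^ 2 / 2 + a0 * x + (a2 / r + lam * R r / r + t0))
        (lam * (↑2 * u ^ 1) / 2 + a0 * 1) u :=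
      ((((hasDerivAt_pow 2 u).const_mul lam).div_const 2).add
        ((hasDerivAt_id u).const_mul a0)).add_const _
    rw [pd1, heq, h.deriv]; push_cast; ring
  -- pd2 tf
  have ht2 : pd2 tf u r =
      a2 * (-(r ^ 2)⁻¹) + (lam * Q r * r⁻¹ + lam * R r * (-(r ^ 2)⁻¹)) := by
    have heq : (fun y => tf u y) =
        fun y : ℝ => (lam * u ^ 2 / 2 + a0 * u + t0) + a2 * y⁻¹ + (lam * R y) * y⁻¹ := by
      funext y; rw [htf]; ring
    have h : HasDerivAt
        (fun y : ℝ => (lam * u ^ 2 / 2 + a0 * u + t0) + a2 * y⁻¹ + (lam * R y) * y⁻¹)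
        (0 + a2 * (-(r ^ 2)⁻¹) + (lam * Q r * r⁻¹ + lam * R r * (-(r ^ 2)⁻¹))) r :=
      ((hasDerivAt_const r _).add (hinv.const_mul a2)).add
        (((hR r hr).const_mul lam).mul hinv)
    rw [pd2, heq, h.deriv]; ring
  -- pd1 xf
  have hx1 : pd1 xf u r =
      lam / 3 * (3 * u ^ 2) + a0 / 2 * (2 * u)
        + (-(lam * Q r) + lam * R r / r + a2 / r) := by
    have heq : (fun x => xf x r) =
        fun x : ℝ => lam / 3 * x ^ 3 + a0 / 2 * x ^ 2
          + (-(lam * Q r) + lam * R r / r + a2 / r) * x + (-(a0 * Q r) + x0) := by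
      funext x; rw [hxf]; ring
    have h : HasDerivAt
        (fun x : ℝ => lam / 3 * x ^ 3 + a0 / 2 * x ^ 2
          + (-(lam * Q r) + lam * R r / r + a2 / r) * x + (-(a0 * Q r) + x0))
        (lam / 3 * (↑3 * u ^ 2) + a0 / 2 * (↑2 * u ^ 1)
          + (-(lam * Q r) + lam * R r / r + a2 / r) * 1) u :=
      ((((hasDerivAt_pow 3 u).const_mul (lam / 3)).add
        ((hasDerivAt_pow 2 u).const_mul (a0 / 2))).add
        ((hasDerivAt_id u).const_mul _)).add_const _
    rw [pd1, heq, h.deriv]; push_cast; ring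
  -- pd2 xf
  have hx2 : pd2 xf u r =
      (-(lam * u) - a0) * (r * A r ^ 2)
        + (lam * u * Q r * r⁻¹ + (lam * u * R r + a2 * u) * (-(r ^ 2)⁻¹)) := by
    have heq : (fun y => xf u y) =
        fun y : ℝ => (lam * u ^ 3 / 3 + a0 * u ^ 2 / 2 + x0)
          + (-(lam * u) - a0) * Q y + (lam * u * R y + a2 * u) * y⁻¹ := by
      funext y; rw [hxf]; ring
    have h : HasDerivAt
        (fun y : ℝ => (lam * u ^ 3 / 3 + a0 * u ^ 2 / 2 + x0)
          + (-(lam * u) - a0) * Q y + (lam * u * R y + a2 * u) * y⁻¹)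
        (0 + (-(lam * u) - a0) * (r * A r ^ 2)
          + (lam * u * Q r * r⁻¹ + (lam * u * R r + a2 * u) * (-(r ^ 2)⁻¹))) r :=
      ((hasDerivAt_const r _).add ((hQ r hr).const_mul _)).add
        ((((hR r hr).const_mul (lam * u)).add_const (a2 * u)).mul hinv)
    rw [pd2, heq, h.deriv]; ring
  rw [ht1, ht2, hx1, hx2]
  constructor <;> (field_simp; ring)
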